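/- Let V be a finite-dimensional real vector space with symmetric bilinear form B, let γ₁,…,γₙ ∈ V be non-isotropic, let a ∈ Rad(B), and let m₁,…,mₙ ∈ ℤ. Then for any x ∈ V: s_{γₙ+mₙa} ∘ ⋯ ∘ s_{γ₁+m₁a}(x) = s_{γₙ} ∘ ⋯ ∘ s_{γ₁}(x) − ( Σᵢ mᵢ · B(x, s_{γ₁}⋯s_{γ_{i−1}}(γᵢ^♯)) ) · a, where γ^♯ = (2/B(γ,γ))·γ. -/

import Mathlib

/-- The reflection in a non-isotropic vector `v`: `s_v x = x - (2 B(x,v)/B(v,v)) • v`. -/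
noncomputable def reflVec {V : Type*} [AddCommGroup V] [Module ℝ V]
    (B : LinearMap.BilinForm ℝ V) (v x : V) : V :=
  x - ((2 * B x v) / B v v) • v

/-- The dual vector `v^♯ = (2 / B(v,v)) • v`. -/
noncomputable def sharpVec {V : Type*} [AddCommGroup V] [Module ℝ V]
    (B : LinearMap.BilinForm ℝ V) (v : V) : V :=
  (2 / B v v) • v

section Aux

variable {V : Type*} [AddCommGroup V] [Module ℝ V] (B : LinearMap.BilinForm ℝ V)

lemma foldl_comp_apply (L : List (V → V)) (g : V → V) (x : V) :
    L.foldl (fun acc f => f ∘ acc) g x = L.foldl (fun acc f => f ∘ acc) id (g x) := by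
  induction L generalizing g x with
  | nil => rfl
  | cons F L ih =>
      simp only [List.foldl_cons]
      rw [ih, ih (F ∘ id)]
      rfl

lemma refl_shift {a v : V} (hav : B a v = 0) (y : V) (c : ℝ) :
    reflVec B v (y - c • a) = reflVec B v y - c • a := by
  have h : B (y - c • a) v = B y v := by
    simp [map_sub, hav]
  rw [reflVec, reflVec, h, sub_right_comm]

lemma refl_selfadjoint (hsym : ∀ x y, B x y = B y x) (γ y z : V) :
    B (reflVec B γ y) z = B y (reflVec B γ z) := by
  simp only [reflVec, map_sub, map_smul, LinearMap.sub_apply, LinearMap.smul_apply,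
    smul_eq_mul]
  rw [hsym γ z, hsym y γ]
  ring

lemma refl_perturbed (hsym : ∀ x y, B x y = B y x) {a : V} (ha : ∀ w, B a w = 0)
    (γ : V) (m : ℤ) (y : V) :
    reflVec B (γ + m • a) y = reflVec B γ y - ((m : ℝ) * B y (sharpVec B γ)) • a := by
  have hya : ∀ w, B w a = 0 := fun w => by rw [hsym]; exact ha w
  have h1 : B y (γ + m • a) = B y γ := by
    simp [map_add, map_zsmul, hya]
  have h2 : B (γ + m • a) (γ + m • a) = B γ γ := by
    simp [map_add, map_zsmul, ha, hya, h1]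
  have hm : (m : ℤ) • a = (m : ℝ) • a := (Int.cast_smul_eq_zsmul ℝ m a).symm
  rw [reflVec, reflVec, sharpVec, h1, h2, hm, map_smul, smul_eq_mul, smul_add, smul_smul,
    sub_add_eq_sub_sub]
  have : (2 * B y γ / B γ γ) * (m : ℝ) = (m : ℝ) * (2 / B γ γ * B y γ) := by ring
  rw [this]

lemma fold_shift {a : V} (L : List (V → V))
    (h : ∀ F ∈ L, ∀ y (c : ℝ), F (y - c • a) = F y - c • a) (y : V) (c : ℝ) :
    L.foldl (fun acc f => f ∘ acc) id (y - c • a)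
      = L.foldl (fun acc f => f ∘ acc) id y - c • a := by
  induction L generalizing y with
  | nil => rfl
  | cons F L ih =>
      simp only [List.foldl_cons]
      rw [foldl_comp_apply, foldl_comp_apply (L := L) (g := F ∘ id)]
      simp only [Function.comp_apply, id_eq]
      rw [h F List.mem_cons_self y c,
        ih (fun F hF => h F (List.mem_cons_of_mem _ hF))]

end Aux

/-- For non-isotropic `γ₁,…,γₙ`, `a ∈ Rad(B)` and integers `m₁,…,mₙ`:
`s_{γₙ+mₙa} ∘ ⋯ ∘ s_{γ₁+m₁a}(x) = s_{γₙ} ∘ ⋯ ∘ s_{γ₁}(x)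
  − (Σᵢ mᵢ · B(x, s_{γ₁}⋯s_{γ_{i−1}}(γᵢ^♯))) • a`. -/
theorem stmt_12 {V : Type*} [AddCommGroup V] [Module ℝ V]
    (B : LinearMap.BilinForm ℝ V) (hsym : ∀ x y, B x y = B y x)
    {n : ℕ} (γ : Fin n → V) (hiso : ∀ i, B (γ i) (γ i) ≠ 0)
    (a : V) (ha : ∀ w, B a w = 0) (m : Fin n → ℤ) (x : V) :
    ((List.ofFn fun i => reflVec B (γ i + m i • a)).foldl (fun acc f => f ∘ acc) id) x
      = ((List.ofFn fun i => reflVec B (γ i)).foldl (fun acc f => f ∘ acc) id) x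
        - (∑ i : Fin n, (m i : ℝ) *
            B x ((((List.ofFn fun j => reflVec B (γ j)).take (i : ℕ)).foldr (· ∘ ·) id)
              (sharpVec B (γ i)))) • a := by
  have hav : ∀ v : V, B a v = 0 := ha
  have hva : ∀ v : V, B v a = 0 := fun v => by rw [hsym]; exact ha v
  induction n generalizing x with
  | zero => simp
  | succ n ih =>
      -- peel off the first reflection
      rw [List.ofFn_succ, List.ofFn_succ (f := fun i => reflVec B (γ i))]
      simp only [List.foldl_cons]
      rw [foldl_comp_apply, foldl_comp_apply (g := (reflVec B (γ 0)) ∘ id)]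
      simp only [Function.comp_apply, id_eq]
      -- rewrite the first modified reflection
      rw [refl_perturbed B hsym ha (γ 0) (m 0) x]
      -- shift out the a-component
      rw [fold_shift (a := a) _ (by
        intro F hF y c
        obtain ⟨i, rfl⟩ := List.mem_ofFn.mp hF
        exact refl_shift B (hav _) y c)]
      -- apply the induction hypothesis
      rw [ih (fun i => γ i.succ) (fun i => hiso i.succ) (fun i => m i.succ)
        (reflVec B (γ 0) x)]
      rw [Fin.sum_univ_succ]
      simp only [Fin.val_zero, List.take_zero, List.foldr_nil, id_eq, Fin.val_succ,
        List.ofFn_succ, List.take_succ_cons, List.foldr_cons, Function.comp_apply]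
      have hsa : ∀ i : Fin n,
          B (reflVec B (γ 0) x)
            ((List.foldr (· ∘ ·) id ((List.ofFn fun i => reflVec B (γ i.succ)).take (i : ℕ)))
              (sharpVec B (γ i.succ)))
          = B x (reflVec B (γ 0)
            ((List.foldr (· ∘ ·) id ((List.ofFn fun i => reflVec B (γ i.succ)).take (i : ℕ)))
              (sharpVec B (γ i.succ)))) := fun i => refl_selfadjoint B hsym _ _ _
      simp only [hsa]
      rw [sub_sub, ← add_smul, add_comm ((m 0 : ℝ) * B x (sharpVec B (γ 0)))]
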